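/- Let (α_1,…,α_m) ∈ ℚ^m ∩ [0,1]^m with α_1 + ⋯ + α_m > 1. Then for all sufficiently large primes p, the first digits of the nonterminating p-expansions satisfy α_1^(1) + ⋯ + α_m^(1) ≥ p. -/

import Mathlib

lemma digit_lb (p : ℕ) (hp : 2 ≤ p) (d : ℕ → ℕ) (hd : ∀ k, d k ≤ p - 1)
    (a : ℝ) (h : HasSum (fun k => (d k : ℝ) / (p : ℝ) ^ (k + 1)) a) :
    (p : ℝ) * a - 1 ≤ d 0 := by
  have hp0 : (0:ℝ) < p := by positivity
  have hp1 : (1:ℝ) < p := by exact_mod_cast hp.trans_lt' one_lt_two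
  have hpne : (p:ℝ) ≠ 0 := ne_of_gt hp0
  have hpm1 : (0:ℝ) < (p:ℝ) - 1 := by linarith
  -- tail sum
  have htail : HasSum (fun k => ((d (k + 1) : ℝ)) / (p : ℝ) ^ (k + 2))
      (a - ∑ i ∈ Finset.range 1, (d i : ℝ) / (p:ℝ) ^ (i+1)) := by
    have := (hasSum_nat_add_iff' (f := fun k => (d k : ℝ) / (p : ℝ) ^ (k + 1)) 1).2 h
    exact this
  have hrange : ∑ i ∈ Finset.range 1, (d i : ℝ) / (p:ℝ) ^ (i+1) = (d 0 : ℝ) / p := by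
    simp
  rw [hrange] at htail
  -- geometric bound
  have hinv : |(p:ℝ)⁻¹| < 1 := by
    rw [abs_of_pos (by positivity)]
    exact inv_lt_one_of_one_lt₀ hp1
  have hgeo : HasSum (fun k : ℕ => (((p:ℝ) - 1) / (p:ℝ) ^ 2) * ((p:ℝ)⁻¹) ^ k)
      ((((p:ℝ) - 1) / (p:ℝ) ^ 2) * (1 - (p:ℝ)⁻¹)⁻¹) :=
    (hasSum_geometric_of_abs_lt_one hinv).mul_left _
  have hval : (((p:ℝ) - 1) / (p:ℝ) ^ 2) * (1 - (p:ℝ)⁻¹)⁻¹ = 1 / p := by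
    rw [show (1 - (p:ℝ)⁻¹) = ((p:ℝ) - 1)/p by field_simp]
    field_simp
  rw [hval] at hgeo
  have hle : a - (d 0 : ℝ) / p ≤ 1 / p := by
    refine hasSum_le (fun k => ?_) htail hgeo
    have hb : (d (k+1) : ℝ) ≤ (p:ℝ) - 1 := by
      have := hd (k+1)
      have : (d (k+1) : ℝ) ≤ ((p - 1 : ℕ) : ℝ) := by exact_mod_cast this
      rwa [Nat.cast_sub (by omega), Nat.cast_one] at this
    have heq : (((p:ℝ) - 1) / (p:ℝ) ^ 2) * ((p:ℝ)⁻¹) ^ k = ((p:ℝ) - 1) / (p:ℝ) ^ (k+2) := by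
      rw [inv_pow]
      field_simp
      ring_nf
      try exact Or.inl trivial
    rw [heq]
    gcongr
  have := mul_le_mul_of_nonneg_left hle (le_of_lt hp0)
  rw [mul_sub, mul_one_div, div_self hpne] at this
  have h2 : (p:ℝ) * ((d 0 : ℝ)/p) = d 0 := by field_simp
  linarith

/-- If `(α_1,…,α_m) ∈ ℚ^m ∩ [0,1]^m` with `α_1 + ⋯ + α_m > 1`, then for all
sufficiently large primes `p`, the first digits of the nonterminating base-`p`
expansions satisfy `α_1^(1) + ⋯ + α_m^(1) ≥ p` (the digits of `0` are all zero).
Here `d i 0` denotes the first digit of `α i`. -/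
theorem stmt5 (m : ℕ) (α : Fin m → ℚ) (hα : ∀ i, α i ∈ Set.Icc (0 : ℚ) 1)
    (hsum : 1 < ∑ i, α i) :
    ∃ P : ℕ, ∀ p : ℕ, P ≤ p → p.Prime →
      ∀ d : Fin m → ℕ → ℕ,
        (∀ i, (∀ k, d i k ≤ p - 1) ∧
          HasSum (fun k => (d i k : ℝ) / (p : ℝ) ^ (k + 1)) ((α i : ℝ)) ∧
          ((α i : ℝ) = 0 ∨ ∀ N, ∃ k ≥ N, d i k ≠ 0)) →
        p ≤ ∑ i, d i 0 := by
  set s : ℚ := ∑ i, α i with hs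
  have hspos : 0 < s - 1 := by linarith
  refine ⟨max 2 ⌈(m : ℚ) / (s - 1)⌉₊, fun p hP hprime d hd => ?_⟩
  have hp2 : 2 ≤ p := le_trans (le_max_left _ _) hP
  have hps : (m : ℚ) ≤ (p : ℚ) * (s - 1) := by
    have : ⌈(m : ℚ) / (s - 1)⌉₊ ≤ p := le_trans (le_max_right _ _) hP
    have h1 : (m : ℚ) / (s - 1) ≤ p := (Nat.ceil_le.1 this).trans_eq rfl
    rw [div_le_iff₀ hspos] at h1
    linarith
  -- each digit lower bound
  have key : ∀ i, (p : ℝ) * (α i : ℝ) - 1 ≤ (d i 0 : ℝ) := fun i => by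
    obtain ⟨h1, h2, _⟩ := hd i
    exact digit_lb p hp2 (d i) h1 _ h2
  have hsumd : (p : ℝ) * ((s : ℚ) : ℝ) - m ≤ ((∑ i, d i 0 : ℕ) : ℝ) := by
    push_cast
    rw [hs]
    push_cast
    rw [Finset.mul_sum]
    calc (∑ i, (p:ℝ) * (α i : ℝ)) - m = ∑ i : Fin m, ((p:ℝ) * (α i : ℝ) - 1) := by
          rw [Finset.sum_sub_distrib]
          simp
      _ ≤ ∑ i, (d i 0 : ℝ) := Finset.sum_le_sum fun i _ => key i
  have hps' : (m : ℝ) ≤ (p : ℝ) * (((s : ℚ) : ℝ) - 1) := by exact_mod_cast hps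
  have : (p : ℝ) ≤ ((∑ i, d i 0 : ℕ) : ℝ) := by nlinarith
  exact_mod_cast this
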